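/- If d divides the exponent v of a finite abelian group G of order n, then λ_{k,l}(G) ≥ λ_{k,l}(Z_d)·(n/d). -/

import Mathlib

open Finset Pointwise

/-- The h-fold sumset of a finset. -/
def foldSum {G : Type*} [AddCommGroup G] [DecidableEq G] (A : Finset G) : ℕ → Finset G
  | 0 => {0}
  | n + 1 => A + foldSum A n

/-- An embedding of `ZMod d` into the rational circle. -/
noncomputable def psiAux (d : ℕ) : ZMod d →+ AddCircle (1 : ℚ) :=
  ZMod.lift d ⟨zmultiplesHom _ (((d : ℚ)⁻¹ : ℚ) : AddCircle (1 : ℚ)), by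
    simp only [zmultiplesHom_apply]
    rw [← AddCircle.coe_zsmul, AddCircle.coe_eq_zero_iff]
    rcases eq_or_ne d 0 with rfl | hd
    · exact ⟨0, by simp⟩
    · exact ⟨1, by
        rw [one_smul, zsmul_eq_mul]
        field_simp
        simp⟩⟩

lemma psiAux_intCast (d : ℕ) (z : ℤ) :
    psiAux d (z : ZMod d) = (((z : ℚ) * (d : ℚ)⁻¹ : ℚ) : AddCircle (1 : ℚ)) := by
  rw [psiAux, ZMod.lift_coe]
  simp only [zmultiplesHom_apply]
  rw [← AddCircle.coe_zsmul, zsmul_eq_mul]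

lemma psiAux_injective (d : ℕ) (hd : d ≠ 0) : Function.Injective (psiAux d) := by
  rw [injective_iff_map_eq_zero]
  intro b hb
  obtain ⟨z, rfl⟩ := ZMod.intCast_surjective b
  rw [psiAux_intCast, AddCircle.coe_eq_zero_iff] at hb
  obtain ⟨m, hm⟩ := hb
  rw [ZMod.intCast_zmod_eq_zero_iff_dvd]
  refine ⟨m, ?_⟩
  rw [mul_comm]
  have hd' : (d : ℚ) ≠ 0 := Nat.cast_ne_zero.mpr hd
  have : (z : ℚ) = (m : ℚ) * d := by
    rw [zsmul_eq_mul, mul_one] at hm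
    field_simp at hm ⊢
    linarith [hm]
  exact_mod_cast this

lemma psiAux_range (d : ℕ) (hd : d ≠ 0) (y : AddCircle (1 : ℚ)) (hy : d • y = 0) :
    ∃ b : ZMod d, psiAux d b = y := by
  obtain ⟨q, rfl⟩ := QuotientAddGroup.mk_surjective y
  rw [← AddCircle.coe_nsmul, AddCircle.coe_eq_zero_iff] at hy
  obtain ⟨m, hm⟩ := hy
  refine ⟨(m : ZMod d), ?_⟩
  rw [psiAux_intCast]
  congr 1
  have hd' : (d : ℚ) ≠ 0 := Nat.cast_ne_zero.mpr hd
  rw [zsmul_eq_mul, mul_one] at hm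
  rw [nsmul_eq_mul] at hm
  field_simp
  linarith [hm]

/-- A character with prescribed value `1/v` on an element of order `v`. -/
lemma exists_char {G : Type*} [AddCommGroup G] (g : G) (v : ℕ) (hg : addOrderOf g = v) :
    ∃ χ : G →+ AddCircle (1 : ℚ), χ g = (((v : ℚ)⁻¹ : ℚ) : AddCircle (1 : ℚ)) := by
  let l : (ℤ ⧸ Ideal.span {(addOrderOf g : ℤ)}) →ₗ[ℤ] AddCircle (1 : ℚ) :=
    Submodule.liftQSpanSingleton _ (CharacterModule.int.divByNat v).toIntLinearMap (by
      rw [hg]; exact CharacterModule.int.divByNat_self v)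
  let c₀ : (ℤ ∙ g) →ₗ[ℤ] AddCircle (1 : ℚ) :=
    l ∘ₗ (CharacterModule.intSpanEquivQuotAddOrderOf g).toLinearMap
  have hc₀ : c₀ ⟨g, Submodule.mem_span_singleton_self g⟩ = ((v : ℚ)⁻¹ : ℚ) := by
    show l ((CharacterModule.intSpanEquivQuotAddOrderOf g)
      ⟨g, Submodule.mem_span_singleton_self g⟩) = _
    rw [CharacterModule.intSpanEquivQuotAddOrderOf_apply_self]
    show (CharacterModule.int.divByNat v) 1 = _
    erw [LinearMap.toAddMonoidHom_coe, LinearMap.toSpanSingleton_apply_one]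
  obtain ⟨χ, hχ⟩ := CharacterModule.dual_surjective_of_injective
    ((ℤ ∙ g).subtype) (Submodule.injective_subtype _) c₀.toAddMonoidHom
  refine ⟨χ, ?_⟩
  have := congrArg (fun f : CharacterModule (ℤ ∙ g) =>
    f ⟨g, Submodule.mem_span_singleton_self g⟩) hχ
  exact this.trans hc₀

lemma foldSum_rel {G Z H : Type*} [AddCommGroup G] [AddCommGroup Z] [AddCommGroup H]
    [DecidableEq G] [DecidableEq Z] (f : G →+ H) (g : Z →+ H) (A : Finset G) (B : Finset Z)
    (hAB : ∀ a ∈ A, ∃ b ∈ B, g b = f a) :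
    ∀ n, ∀ x ∈ foldSum A n, ∃ b ∈ foldSum B n, g b = f x := by
  intro n
  induction n with
  | zero =>
    intro x hx
    simp only [foldSum, Finset.mem_singleton] at hx
    subst hx
    exact ⟨0, by simp [foldSum], by simp⟩
  | succ n ih =>
    intro x hx
    rw [foldSum, Finset.mem_add] at hx
    obtain ⟨a, ha, y, hy, rfl⟩ := hx
    obtain ⟨b, hb, hgb⟩ := hAB a ha
    obtain ⟨c, hc, hgc⟩ := ih y hy
    exact ⟨b + c, by rw [foldSum]; exact Finset.add_mem_add hb hc, by
      rw [map_add, map_add, hgb, hgc]⟩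

lemma fiber_card {G H : Type*} [AddCommGroup G] [Fintype G] [DecidableEq G] [AddCommGroup H] [DecidableEq H]
    (χ : G →+ H) (x₀ : G) :
    (univ.filter fun x : G => χ x = χ x₀).card = (univ.filter fun x : G => χ x = 0).card := by
  apply Finset.card_bij' (fun x _ => x - x₀) (fun x _ => x + x₀)
  · intro x hx
    simp only [mem_filter, mem_univ, true_and] at hx ⊢
    rw [map_sub, hx, sub_self]
  · intro x hx
    simp only [mem_filter, mem_univ, true_and] at hx ⊢
    rw [map_add, hx, zero_add]
  · intro x _; exact sub_add_cancel x x₀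
  · intro x _; exact add_sub_cancel_right x x₀

set_option maxHeartbeats 1000000 in
/-- If d divides the exponent of G, then λ_{k,l}(G) ≥ λ_{k,l}(Z_d)·(n/d). -/
theorem stmt5 {G : Type*} [AddCommGroup G] [Fintype G] [DecidableEq G]
    (k l d : ℕ) (hl : 1 ≤ l) (hkl : l < k)
    (hd : d ∣ AddMonoid.exponent G) :
    ∀ B : Finset (ZMod d), Disjoint (foldSum B k) (foldSum B l) →
      ∃ A : Finset G, Disjoint (foldSum A k) (foldSum A l) ∧
        B.card * (Fintype.card G / d) ≤ A.card := by
  classical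
  intro B hB
  set v := AddMonoid.exponent G with hv
  have hv0 : v ≠ 0 := AddMonoid.exponent_ne_zero_of_finite
  have hd0 : d ≠ 0 := fun h => hv0 (Nat.eq_zero_of_zero_dvd (h ▸ hd))
  haveI : NeZero d := ⟨hd0⟩
  have hdQ : (d : ℚ) ≠ 0 := Nat.cast_ne_zero.mpr hd0
  have hvQ : (v : ℚ) ≠ 0 := Nat.cast_ne_zero.mpr hv0
  obtain ⟨g, hg⟩ := AddMonoid.exists_addOrderOf_eq_exponent
    (AddMonoid.exponent_ne_zero.mp hv0)
  obtain ⟨χ, hχ⟩ := exists_char g v hg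
  set χ' : G →+ AddCircle (1 : ℚ) := (v / d) • χ with hχ'def
  have hχ'g : χ' g = psiAux d 1 := by
    have h1 : psiAux d 1 = (((d : ℚ)⁻¹ : ℚ) : AddCircle (1 : ℚ)) := by
      have := psiAux_intCast d 1
      simpa using this
    rw [h1]
    show (v / d) • χ g = _
    rw [hχ, ← AddCircle.coe_nsmul]
    congr 1
    rw [nsmul_eq_mul, Nat.cast_div_charZero hd]
    field_simp
  have hχ'tor : ∀ x : G, d • χ' x = 0 := by
    intro x
    show d • ((v / d) • χ x) = 0
    rw [← mul_nsmul, Nat.div_mul_cancel hd, ← map_nsmul]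
    rw [AddMonoid.exponent_nsmul_eq_zero, map_zero]
  have hsurj : ∀ b : ZMod d, ∃ x : G, χ' x = psiAux d b := by
    intro b
    obtain ⟨m, rfl⟩ := ZMod.intCast_surjective b
    refine ⟨m • g, ?_⟩
    rw [map_zsmul, hχ'g, ← map_zsmul]
    congr 1
    rw [zsmul_eq_mul, mul_one]
  set A : Finset G := B.biUnion (fun b => univ.filter fun x => χ' x = psiAux d b) with hA
  have hmemA : ∀ a ∈ A, ∃ b ∈ B, psiAux d b = χ' a := by
    intro a ha
    rw [hA, Finset.mem_biUnion] at ha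
    obtain ⟨b, hb, hab⟩ := ha
    rw [mem_filter] at hab
    exact ⟨b, hb, hab.2.symm⟩
  refine ⟨A, ?_, ?_⟩
  · rw [Finset.disjoint_left]
    intro x hxk hxl
    obtain ⟨b, hbk, hbx⟩ := foldSum_rel χ' (psiAux d) A B hmemA k x hxk
    obtain ⟨c, hcl, hcx⟩ := foldSum_rel χ' (psiAux d) A B hmemA l x hxl
    have hbc : b = c := psiAux_injective d hd0 (hbx.trans hcx.symm)
    exact (Finset.disjoint_left.mp hB) hbk (hbc ▸ hcl)
  · have hdisj : ∀ b ∈ B, ∀ c ∈ B, b ≠ c →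
        Disjoint (univ.filter fun x : G => χ' x = psiAux d b)
          (univ.filter fun x : G => χ' x = psiAux d c) := by
      intro b _ c _ hbc
      rw [Finset.disjoint_left]
      intro x hx1 hx2
      rw [mem_filter] at hx1 hx2
      exact hbc (psiAux_injective d hd0 (hx1.2 ▸ hx2.2))
    rw [hA, Finset.card_biUnion hdisj]
    set c0 := (univ.filter fun x : G => χ' x = 0).card with hc0
    have hfib : ∀ b : ZMod d, (univ.filter fun x : G => χ' x = psiAux d b).card = c0 := by
      intro b
      obtain ⟨x₀, hx₀⟩ := hsurj b
      rw [← hx₀]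
      exact fiber_card χ' x₀
    have hcount : Fintype.card G ≤ d * c0 := by
      have h1 : Fintype.card G = ∑ y ∈ univ.image χ', (univ.filter fun x : G => χ' x = y).card := by
        rw [← Finset.card_eq_sum_card_image]
        exact (Finset.card_univ).symm
      have h2 : ∀ y ∈ univ.image χ', (univ.filter fun x : G => χ' x = y).card = c0 := by
        intro y hy
        rw [Finset.mem_image] at hy
        obtain ⟨x₀, _, rfl⟩ := hy
        exact fiber_card χ' x₀
      rw [h1, Finset.sum_congr rfl h2, Finset.sum_const, smul_eq_mul]
      have h3 : (univ.image χ').card ≤ d := by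
        have hsub : univ.image χ' ⊆ univ.image (psiAux d) := by
          intro y hy
          rw [Finset.mem_image] at hy ⊢
          obtain ⟨x, _, rfl⟩ := hy
          obtain ⟨b, hb⟩ := psiAux_range d hd0 _ (hχ'tor x)
          exact ⟨b, mem_univ b, hb⟩
        calc (univ.image χ').card ≤ (univ.image (psiAux d)).card := Finset.card_le_card hsub
          _ ≤ (univ : Finset (ZMod d)).card := Finset.card_image_le
          _ = d := by rw [Finset.card_univ, ZMod.card]
      exact Nat.mul_le_mul_right c0 h3
    have hdiv : Fintype.card G / d ≤ c0 := by
      calc Fintype.card G / d ≤ (d * c0) / d := Nat.div_le_div_right hcount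
        _ = c0 := Nat.mul_div_cancel_left c0 (Nat.pos_of_ne_zero hd0)
    calc B.card * (Fintype.card G / d) ≤ B.card * c0 := Nat.mul_le_mul_left _ hdiv
      _ = ∑ _b ∈ B, c0 := by rw [Finset.sum_const, smul_eq_mul]
      _ ≤ ∑ b ∈ B, (univ.filter fun x : G => χ' x = psiAux d b).card :=
          Finset.sum_le_sum fun b _ => (hfib b).ge
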